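/- For all 0 < t < s ≤ 1, (∫_t^s (K(s,t) − K(u,t)) (s−u)^{−(1/2+H)} du)² ≤ 2 c_H² (B(H−1/2, 3/2−H)² + 1/(H−1/2)²) t^{1−2H} / (H−1/2)², the inner integral being absolutely convergent. -/

import Mathlib

open MeasureTheory Real Set

noncomputable def betaFn (a b : ℝ) : ℝ := Real.Gamma a * Real.Gamma b / Real.Gamma (a + b)

noncomputable def cH (H : ℝ) : ℝ := Real.sqrt (H * (2*H - 1) / betaFn (2 - 2*H) (H - 1/2))

/-- The kernel `K(t,s)` of the fractional integral operator, for Hurst parameter `H`. -/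
noncomputable def Ker (H t s : ℝ) : ℝ :=
  if s < t then cH H * s ^ ((1:ℝ)/2 - H) * ∫ u in s..t, u ^ (H - 1/2) * (u - s) ^ (H - 3/2)
  else 0

/-- The operator `(Kh)_t = ∫_0^t K(t,s) h_s ds`. -/
noncomputable def Kop {n : ℕ} (H : ℝ) (h : ℝ → EuclideanSpace ℝ (Fin n)) (t : ℝ) :
    EuclideanSpace ℝ (Fin n) :=
  ∫ s in (0:ℝ)..t, Ker H t s • h s

/-- The constant `C₂ = ∫_0^1 (v^{1/2-H} - 1)(1-v)^{-(1/2+H)} dv`. -/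
noncomputable def C2 (H : ℝ) : ℝ :=
  ∫ v in (0:ℝ)..1, (v ^ ((1:ℝ)/2 - H) - 1) * (1 - v) ^ (-(1/2 + H))

lemma key_ineq {y e B : ℝ} (hy : 2 ≤ y) (he0 : 0 ≤ e) (he : e ≤ 2) :
    (y + e)^2 ≤ 2 * (B^2 + y^2) * y^2 := by
  have h0 : (0:ℝ) ≤ y := by linarith
  have h4 : (4:ℝ) ≤ y^2 := by nlinarith
  have hA : (y + e)^2 ≤ 4 * y^2 := by
    nlinarith [mul_nonneg (by linarith : (0:ℝ) ≤ y - e) (by linarith : (0:ℝ) ≤ 3*y + e)]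
  have hB : 4 * y^2 ≤ 2 * y^2 * y^2 := by nlinarith
  have hC : 2 * y^2 * y^2 ≤ 2 * (B^2 + y^2) * y^2 := by
    nlinarith [mul_nonneg (sq_nonneg B) (sq_nonneg y)]
  linarith


/-- Estimate (41): for `0 < t < s ≤ 1`,
`(∫_t^s (K(s,t)-K(u,t))(s-u)^{-(1/2+H)} du)² ≤ 2c_H²(B(H-1/2,3/2-H)² + 1/(H-1/2)²) t^{1-2H}/(H-1/2)²`,
the inner integral being absolutely convergent. -/
theorem stmt_14 (H : ℝ) (hH : H ∈ Set.Ioo (1/2 : ℝ) 1) (t s : ℝ)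
    (ht : 0 < t) (hts : t < s) (hs : s ≤ 1) :
    IntegrableOn (fun u : ℝ => (Ker H s t - Ker H u t) * (s - u) ^ (-(1/2 + H)))
      (Set.Ioo t s) ∧
    (∫ u in t..s, (Ker H s t - Ker H u t) * (s - u) ^ (-(1/2 + H)))^2 ≤
      2 * (cH H)^2 * ((betaFn (H - 1/2) (3/2 - H))^2 + 1 / (H - 1/2)^2) *
        t ^ (1 - 2*H) / (H - 1/2)^2 := by
  obtain ⟨h1, h2⟩ := hH
  have hc : (0:ℝ) < H - 1/2 := by linarith
  have hcH : 0 ≤ cH H := Real.sqrt_nonneg _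
  set C : ℝ := cH H * t ^ ((1:ℝ)/2 - H) with hCdef
  have hC : 0 ≤ C := mul_nonneg hcH (Real.rpow_nonneg ht.le _)
  set m : ℝ := (t + s)/2 with hm
  have htm : t < m := by rw [hm]; linarith
  have hms : m < s := by rw [hm]; linarith
  -- integrability of inner integrand from t
  have hinner : ∀ b, t ≤ b →
      IntervalIntegrable (fun v => v ^ (H - 1/2) * (v - t) ^ (H - 3/2)) volume t b := by
    intro b hb
    have hint : IntervalIntegrable (fun x => (x - t) ^ (H - 3/2)) volume t b := by
      have := (intervalIntegral.intervalIntegrable_rpow' (r := H - 3/2)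
        (by linarith) (a := 0) (b := b - t)).comp_sub_right t
      simpa using this
    refine hint.continuousOn_mul ?_
    refine ContinuousOn.rpow_const continuousOn_id fun x hx => ?_
    rw [Set.uIcc_of_le hb] at hx
    exact Or.inl (ne_of_gt (lt_of_lt_of_le ht hx.1))
  have hKer : ∀ b, t < b → Ker H b t =
      C * ∫ v in t..b, v ^ (H - 1/2) * (v - t) ^ (H - 3/2) := by
    intro b hb
    rw [Ker, if_pos hb]
  have hdiff : ∀ u ∈ Set.Ioo t s, Ker H s t - Ker H u t
      = C * ∫ v in u..s, v ^ (H - 1/2) * (v - t) ^ (H - 3/2) := by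
    intro u hu
    rw [hKer s hts, hKer u hu.1, ← mul_sub,
      intervalIntegral.integral_interval_sub_left (hinner s hts.le) (hinner u hu.1.le)]
  have hinner_nonneg : ∀ u ∈ Set.Ioo t s,
      0 ≤ ∫ v in u..s, v ^ (H - 1/2) * (v - t) ^ (H - 3/2) := by
    intro u hu
    refine intervalIntegral.integral_nonneg hu.2.le fun v hv => ?_
    exact mul_nonneg (Real.rpow_nonneg (by linarith [hv.1, hu.1] : (0:ℝ) ≤ v) _)
      (Real.rpow_nonneg (by linarith [hv.1, hu.1]) _)
  have hinner_le : ∀ u ∈ Set.Ioo t s,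
      (∫ v in u..s, v ^ (H - 1/2) * (v - t) ^ (H - 3/2)) ≤ (s - u) * (u - t) ^ (H - 3/2) := by
    intro u hu
    have heq : (∫ _v in u..s, (u - t) ^ (H - 3/2)) = (s - u) * (u - t) ^ (H - 3/2) := by
      rw [intervalIntegral.integral_const, smul_eq_mul]
    rw [← heq]
    refine intervalIntegral.integral_mono_on hu.2.le ?_ intervalIntegrable_const ?_
    · exact (hinner s hts.le).mono_set (by
        rw [Set.uIcc_of_le hu.2.le, Set.uIcc_of_le hts.le]
        exact Set.Icc_subset_Icc hu.1.le le_rfl)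
    · intro v hv
      have h0v : (0:ℝ) < v := lt_trans ht (lt_of_lt_of_le hu.1 hv.1)
      calc v ^ (H - 1/2) * (v - t) ^ (H - 3/2)
          ≤ 1 * (u - t) ^ (H - 3/2) := by
            apply mul_le_mul
            · exact Real.rpow_le_one h0v.le (le_trans hv.2 hs) (by linarith)
            · exact Real.rpow_le_rpow_of_nonpos (by linarith [hu.1]) (by linarith [hv.1])
                (by linarith)
            · exact Real.rpow_nonneg (by linarith [hv.1, hu.1]) _
            · exact zero_le_one
        _ = (u - t) ^ (H - 3/2) := one_mul _
  -- f and its dominating function g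
  set f : ℝ → ℝ := fun u => (Ker H s t - Ker H u t) * (s - u) ^ (-(1/2 + H)) with hfdef
  set g : ℝ → ℝ := fun u => C * ((u - t) ^ (H - 3/2) * (s - u) ^ ((1:ℝ)/2 - H)) with hgdef
  have hf_nonneg : ∀ u ∈ Set.Ioo t s, 0 ≤ f u := by
    intro u hu
    rw [hfdef]
    exact mul_nonneg (by rw [hdiff u hu]; exact mul_nonneg hC (hinner_nonneg u hu))
      (Real.rpow_nonneg (by linarith [hu.2]) _)
  have hf_le : ∀ u ∈ Set.Ioo t s, f u ≤ g u := by
    intro u hu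
    have hsu : (0:ℝ) < s - u := by linarith [hu.2]
    have key : (s - u) * (s - u) ^ (-(1/2 + H)) = (s - u) ^ ((1:ℝ)/2 - H) := by
      rw [show ((1:ℝ)/2 - H) = 1 + (-(1/2 + H)) by ring, Real.rpow_add hsu, Real.rpow_one]
    calc f u = (C * ∫ v in u..s, v ^ (H - 1/2) * (v - t) ^ (H - 3/2)) *
          (s - u) ^ (-(1/2 + H)) := by simp only [hfdef]; rw [hdiff u hu]
      _ ≤ (C * ((s - u) * (u - t) ^ (H - 3/2))) * (s - u) ^ (-(1/2 + H)) := by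
          exact mul_le_mul_of_nonneg_right
            (mul_le_mul_of_nonneg_left (hinner_le u hu) hC) (Real.rpow_nonneg hsu.le _)
      _ = C * ((u - t) ^ (H - 3/2) * ((s - u) * (s - u) ^ (-(1/2 + H)))) := by ring
      _ = g u := by rw [key]
  -- integrability of g
  have hbase1 : ∀ a b : ℝ, IntervalIntegrable (fun x => (x - t) ^ (H - 3/2)) volume a b := by
    intro a b
    have := (intervalIntegral.intervalIntegrable_rpow' (r := H - 3/2)
      (by linarith) (a := a - t) (b := b - t)).comp_sub_right t
    simpa using this
  have hbase2 : ∀ a b : ℝ, IntervalIntegrable (fun x => (s - x) ^ ((1:ℝ)/2 - H)) volume a b := by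
    intro a b
    have := (intervalIntegral.intervalIntegrable_rpow' (r := (1:ℝ)/2 - H)
      (by linarith) (a := s - a) (b := s - b)).comp_sub_left s
    simpa using this
  have hg1 : IntervalIntegrable g volume t m := by
    refine IntervalIntegrable.const_mul ?_ C
    refine (hbase1 t m).mul_continuousOn ?_
    refine ContinuousOn.rpow_const (continuousOn_const.sub continuousOn_id) fun x hx => ?_
    rw [Set.uIcc_of_le htm.le] at hx
    exact Or.inl (ne_of_gt (by linarith [hx.2] : (0:ℝ) < s - x))
  have hg2 : IntervalIntegrable g volume m s := by
    refine IntervalIntegrable.const_mul ?_ C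
    refine (hbase2 m s).continuousOn_mul ?_
    refine ContinuousOn.rpow_const (continuousOn_id.sub continuousOn_const) fun x hx => ?_
    rw [Set.uIcc_of_le hms.le] at hx
    exact Or.inl (ne_of_gt (by linarith [hx.1] : (0:ℝ) < x - t))
  have hg_int : IntervalIntegrable g volume t s := hg1.trans hg2
  have hg_on : IntegrableOn g (Set.Ioo t s) := hg_int.1.mono_set Set.Ioo_subset_Ioc_self
  -- continuity of f on Ioo
  have hf_cont : ContinuousOn f (Set.Ioo t s) := by
    have hprim : ContinuousOn (fun u => Ker H u t) (Set.Ioo t s) := by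
      have hcp : ContinuousOn (fun u => C * ∫ v in t..u,
          v ^ (H - 1/2) * (v - t) ^ (H - 3/2)) (Set.Ioo t s) := by
        refine continuousOn_const.mul ?_
        refine (intervalIntegral.continuousOn_primitive_interval'
          (hinner s hts.le) ?_).mono ?_
        · exact Set.left_mem_uIcc
        · rw [Set.uIcc_of_le hts.le]; exact Set.Ioo_subset_Icc_self
      exact hcp.congr fun u hu => hKer u hu.1
    refine (continuousOn_const.sub hprim).mul ?_
    refine ContinuousOn.rpow_const (continuousOn_const.sub continuousOn_id) fun x hx => ?_
    exact Or.inl (ne_of_gt (by linarith [hx.2] : (0:ℝ) < s - x))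
  have hf_meas : AEStronglyMeasurable f (volume.restrict (Set.Ioo t s)) :=
    hf_cont.aestronglyMeasurable measurableSet_Ioo
  have hf_on : IntegrableOn f (Set.Ioo t s) := by
    refine Integrable.mono' hg_on hf_meas ?_
    refine (ae_restrict_iff' measurableSet_Ioo).2 (Filter.Eventually.of_forall fun u hu => ?_)
    rw [Real.norm_of_nonneg (hf_nonneg u hu)]
    exact hf_le u hu
  refine ⟨hf_on, ?_⟩
  -- value bounds for ∫ g
  have hd : (0:ℝ) < m - t := by linarith
  have hd' : m - t = s - m := by rw [hm]; ring
  have hgm1 : (∫ u in t..m, g u) ≤ C * (1 / (H - 1/2)) := by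
    have hmono : (∫ u in t..m, g u) ≤
        ∫ u in t..m, (C * (s - m) ^ ((1:ℝ)/2 - H)) * (u - t) ^ (H - 3/2) := by
      refine intervalIntegral.integral_mono_on htm.le hg1
        (((hbase1 t m).const_mul _)) fun u hu => ?_
      rw [hgdef]
      have : (s - u) ^ ((1:ℝ)/2 - H) ≤ (s - m) ^ ((1:ℝ)/2 - H) :=
        Real.rpow_le_rpow_of_nonpos (by linarith : (0:ℝ) < s - m)
          (by linarith [hu.2]) (by linarith)
      calc C * ((u - t) ^ (H - 3/2) * (s - u) ^ ((1:ℝ)/2 - H))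
          ≤ C * ((u - t) ^ (H - 3/2) * (s - m) ^ ((1:ℝ)/2 - H)) := by
            refine mul_le_mul_of_nonneg_left ?_ hC
            exact mul_le_mul_of_nonneg_left this (Real.rpow_nonneg (by linarith [hu.1]) _)
        _ = (C * (s - m) ^ ((1:ℝ)/2 - H)) * (u - t) ^ (H - 3/2) := by ring
    have hval : (∫ u in t..m, (u - t) ^ (H - 3/2)) = (m - t) ^ (H - 1/2) / (H - 1/2) := by
      rw [intervalIntegral.integral_comp_sub_right (fun x => x ^ (H - 3/2)) t,
        integral_rpow (Or.inl (by linarith)), sub_self,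
        Real.zero_rpow (by intro hcontra; linarith [hcontra] : H - 3/2 + 1 ≠ 0)]
      rw [show H - 3/2 + 1 = H - 1/2 by ring, sub_zero]
    have hRHS : (∫ u in t..m, (C * (s - m) ^ ((1:ℝ)/2 - H)) * (u - t) ^ (H - 3/2))
        = (C * (s - m) ^ ((1:ℝ)/2 - H)) * ((m - t) ^ (H - 1/2) / (H - 1/2)) := by
      rw [intervalIntegral.integral_const_mul, hval]
    refine le_trans (hmono.trans (le_of_eq hRHS)) (le_of_eq ?_)
    rw [hd']
    have : (s - m) ^ ((1:ℝ)/2 - H) * ((s - m) ^ (H - 1/2)) = 1 := by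
      rw [← Real.rpow_add (by linarith : (0:ℝ) < s - m)]
      norm_num
    calc C * (s - m) ^ ((1:ℝ)/2 - H) * ((s - m) ^ (H - 1/2) / (H - 1/2))
        = C * ((s - m) ^ ((1:ℝ)/2 - H) * (s - m) ^ (H - 1/2)) * (1 / (H - 1/2)) := by ring
      _ = C * (1 / (H - 1/2)) := by rw [this, mul_one]
  have hgm2 : (∫ u in m..s, g u) ≤ C * (1 / (3/2 - H)) := by
    have hmono : (∫ u in m..s, g u) ≤
        ∫ u in m..s, (C * (m - t) ^ (H - 3/2)) * (s - u) ^ ((1:ℝ)/2 - H) := by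
      refine intervalIntegral.integral_mono_on hms.le hg2
        (((hbase2 m s).const_mul _)) fun u hu => ?_
      rw [hgdef]
      have : (u - t) ^ (H - 3/2) ≤ (m - t) ^ (H - 3/2) :=
        Real.rpow_le_rpow_of_nonpos hd (by linarith [hu.1]) (by linarith)
      calc C * ((u - t) ^ (H - 3/2) * (s - u) ^ ((1:ℝ)/2 - H))
          ≤ C * ((m - t) ^ (H - 3/2) * (s - u) ^ ((1:ℝ)/2 - H)) := by
            refine mul_le_mul_of_nonneg_left ?_ hC
            exact mul_le_mul_of_nonneg_right this (Real.rpow_nonneg (by linarith [hu.2]) _)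
        _ = (C * (m - t) ^ (H - 3/2)) * (s - u) ^ ((1:ℝ)/2 - H) := by ring
    have hval : (∫ u in m..s, (s - u) ^ ((1:ℝ)/2 - H)) = (s - m) ^ (3/2 - H) / (3/2 - H) := by
      rw [intervalIntegral.integral_comp_sub_left (fun x => x ^ ((1:ℝ)/2 - H)) s,
        sub_self, integral_rpow (Or.inl (by linarith)),
        Real.zero_rpow (by intro hcontra; linarith [hcontra] : (1:ℝ)/2 - H + 1 ≠ 0)]
      rw [show (1:ℝ)/2 - H + 1 = 3/2 - H by ring, sub_zero]
    have hRHS : (∫ u in m..s, (C * (m - t) ^ (H - 3/2)) * (s - u) ^ ((1:ℝ)/2 - H))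
        = (C * (m - t) ^ (H - 3/2)) * ((s - m) ^ (3/2 - H) / (3/2 - H)) := by
      rw [intervalIntegral.integral_const_mul, hval]
    refine le_trans (hmono.trans (le_of_eq hRHS)) (le_of_eq ?_)
    rw [← hd']
    have : (m - t) ^ (H - 3/2) * ((m - t) ^ (3/2 - H)) = 1 := by
      rw [← Real.rpow_add hd]
      norm_num
    calc C * (m - t) ^ (H - 3/2) * ((m - t) ^ (3/2 - H) / (3/2 - H))
        = C * ((m - t) ^ (H - 3/2) * (m - t) ^ (3/2 - H)) * (1 / (3/2 - H)) := by ring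
      _ = C * (1 / (3/2 - H)) := by rw [this, mul_one]
  -- the main integral bound
  set I : ℝ := ∫ u in t..s, f u with hIdef
  have hIoo : I = ∫ u in Set.Ioo t s, f u := by
    rw [hIdef, intervalIntegral.integral_of_le hts.le, integral_Ioc_eq_integral_Ioo]
  have hI0 : 0 ≤ I := by
    rw [hIoo]
    exact setIntegral_nonneg measurableSet_Ioo hf_nonneg
  have hID : I ≤ C * (1 / (H - 1/2) + 1 / (3/2 - H)) := by
    have h1' : I ≤ ∫ u in Set.Ioo t s, g u := by
      rw [hIoo]
      exact setIntegral_mono_on hf_on hg_on measurableSet_Ioo hf_le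
    have h2' : (∫ u in Set.Ioo t s, g u) = (∫ u in t..m, g u) + ∫ u in m..s, g u := by
      rw [← integral_Ioc_eq_integral_Ioo, ← intervalIntegral.integral_of_le hts.le,
        intervalIntegral.integral_add_adjacent_intervals hg1 hg2]
    calc I ≤ (∫ u in t..m, g u) + ∫ u in m..s, g u := by rw [← h2']; exact h1'
      _ ≤ C * (1 / (H - 1/2)) + C * (1 / (3/2 - H)) := add_le_add hgm1 hgm2
      _ = C * (1 / (H - 1/2) + 1 / (3/2 - H)) := by ring
  -- final algebra
  have hI2 : I^2 ≤ (C * (1 / (H - 1/2) + 1 / (3/2 - H)))^2 := by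
    exact pow_le_pow_left₀ hI0 hID 2
  have ht2 : (t ^ ((1:ℝ)/2 - H))^2 = t ^ (1 - 2*H) := by
    rw [sq, ← Real.rpow_add ht]
    congr 1; ring
  have hy : (2:ℝ) ≤ 1 / (H - 1/2) := by
    rw [le_div_iff₀ hc]; linarith
  have he : 1 / (3/2 - H) ≤ 2 := by
    rw [div_le_iff₀ (by linarith : (0:ℝ) < 3/2 - H)]; linarith
  have he0 : (0:ℝ) ≤ 1 / (3/2 - H) := le_of_lt (div_pos one_pos (by linarith))
  have key : (1 / (H - 1/2) + 1 / (3/2 - H))^2 ≤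
      2 * ((betaFn (H - 1/2) (3/2 - H))^2 + (1 / (H - 1/2))^2) * (1 / (H - 1/2))^2 :=
    key_ineq hy he0 he
  have hc0 : (H - 1/2) ≠ 0 := ne_of_gt hc
  calc I^2 ≤ (C * (1 / (H - 1/2) + 1 / (3/2 - H)))^2 := hI2
    _ = (cH H)^2 * (t ^ ((1:ℝ)/2 - H))^2 * (1 / (H - 1/2) + 1 / (3/2 - H))^2 := by
        rw [hCdef]; ring
    _ ≤ (cH H)^2 * (t ^ ((1:ℝ)/2 - H))^2 *
        (2 * ((betaFn (H - 1/2) (3/2 - H))^2 + (1 / (H - 1/2))^2) * (1 / (H - 1/2))^2) := by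
        exact mul_le_mul_of_nonneg_left key (mul_nonneg (sq_nonneg _) (sq_nonneg _))
    _ = 2 * (cH H)^2 * ((betaFn (H - 1/2) (3/2 - H))^2 + 1 / (H - 1/2)^2) *
        t ^ (1 - 2*H) / (H - 1/2)^2 := by
        rw [ht2]
        set c : ℝ := H - 1/2 with hcdef
        field_simp
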